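/- (Kuratowski separation) Let X be a metric space, B₀, B₁ ⊆ X two disjoint closed subsets, and K ⊆ X a compact subset with K ∩ B₀ ≠ ∅ ≠ K ∩ B₁. Assume K contains no connected component C with C ∩ B₀ ≠ ∅ ≠ C ∩ B₁. Then there exists a continuous function ψ : X → [0,1] such that B₀ ⊆ ψ⁻¹(0), B₁ ⊆ ψ⁻¹(1), and for some 0 < δ < 1/2, B₀ ∪ B₁ ∪ K ⊆ ψ⁻¹([0, δ) ∪ (1-δ, 1]). -/
import Mathlib

open Set

lemma clopen_separation_aux {Y : Type*} [TopologicalSpace Y] [CompactSpace Y] [T2Space Y]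
    {A₀ A₁ : Set Y} (hA₀ : IsClosed A₀) (hA₁ : IsClosed A₁)
    (h : ∀ a ∈ A₀, connectedComponent a ∩ A₁ = ∅) :
    ∃ F : Set Y, IsClopen F ∧ A₀ ⊆ F ∧ F ∩ A₁ = ∅ := by
  have key : ∀ a ∈ A₀, ∃ U : Set Y, IsClopen U ∧ a ∈ U ∧ U ∩ A₁ = ∅ := by
    intro a ha
    have hempty : A₁ ∩ ⋂ s : { s : Set Y // IsClopen s ∧ a ∈ s }, (s : Set Y) = ∅ := by
      rw [← connectedComponent_eq_iInter_isClopen a, inter_comm]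
      exact h a ha
    obtain ⟨u, hu⟩ := hA₁.isCompact.elim_finite_subfamily_closed
      (fun s : { s : Set Y // IsClopen s ∧ a ∈ s } => (s : Set Y))
      (fun s => s.2.1.1) hempty
    refine ⟨⋂ i ∈ u, (i : Set Y), isClopen_biInter_finset fun i _ => i.2.1,
      mem_iInter₂.2 fun i _ => i.2.2, ?_⟩
    rw [inter_comm]; exact hu
  choose! U hUclopen hUmem hUdisj using key
  have hcover : A₀ ⊆ ⋃ a ∈ A₀, U a := fun a ha => mem_biUnion ha (hUmem a ha)
  obtain ⟨t, ht, htfin, hsub⟩ := hA₀.isCompact.elim_finite_subcover_image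
    (fun a (ha : a ∈ A₀) => (hUclopen a ha).2) hcover
  refine ⟨⋃ a ∈ t, U a, htfin.isClopen_biUnion (fun a hat => hUclopen a (ht hat)), ?_, ?_⟩
  · intro x hx
    obtain ⟨a, ha, hxa⟩ := mem_iUnion₂.1 (hsub hx)
    exact mem_biUnion ha hxa
  · apply eq_empty_iff_forall_notMem.2
    rintro x ⟨hxU, hxA⟩
    obtain ⟨a, ha, hxa⟩ := mem_iUnion₂.1 hxU
    exact absurd (hUdisj a (ht ha)) (Set.Nonempty.ne_empty ⟨x, hxa, hxA⟩)

/-- Kuratowski separation: Let `X` be a metric space, `B₀, B₁ ⊆ X` two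
disjoint closed subsets, and `K ⊆ X` a compact subset meeting both `B₀` and `B₁`.
Assume `K` contains no connected component meeting both `B₀` and `B₁`.  Then there is a
continuous `ψ : X → [0,1]` with `B₀ ⊆ ψ⁻¹(0)`, `B₁ ⊆ ψ⁻¹(1)`, and for some
`0 < δ < 1/2`, `B₀ ∪ B₁ ∪ K ⊆ ψ⁻¹([0,δ) ∪ (1-δ,1])`. -/
theorem stmt_7
    {X : Type*} [MetricSpace X]
    (B₀ B₁ K : Set X)
    (hB₀ : IsClosed B₀) (hB₁ : IsClosed B₁) (hdisj : Disjoint B₀ B₁)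
    (hK : IsCompact K)
    (h₀ : (K ∩ B₀).Nonempty) (h₁ : (K ∩ B₁).Nonempty)
    (hcomp : ∀ x ∈ K,
      connectedComponentIn K x ∩ B₀ = ∅ ∨ connectedComponentIn K x ∩ B₁ = ∅) :
    ∃ ψ : X → ℝ, Continuous ψ ∧ (∀ x, ψ x ∈ Set.Icc (0:ℝ) 1) ∧
      (∀ x ∈ B₀, ψ x = 0) ∧ (∀ x ∈ B₁, ψ x = 1) ∧
      ∃ δ : ℝ, 0 < δ ∧ δ < 1 / 2 ∧
        ∀ x ∈ B₀ ∪ B₁ ∪ K, ψ x < δ ∨ 1 - δ < ψ x := by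
  haveI : CompactSpace K := isCompact_iff_compactSpace.1 hK
  set A₀ : Set K := Subtype.val ⁻¹' B₀ with hA₀def
  set A₁ : Set K := Subtype.val ⁻¹' B₁ with hA₁def
  have hA₀ : IsClosed A₀ := hB₀.preimage continuous_subtype_val
  have hA₁ : IsClosed A₁ := hB₁.preimage continuous_subtype_val
  have hsep : ∀ a ∈ A₀, connectedComponent a ∩ A₁ = ∅ := by
    rintro a ha
    have himg : connectedComponentIn K (a : X) = Subtype.val '' connectedComponent a :=
      connectedComponentIn_eq_image a.2
    rcases hcomp a a.2 with h | h
    · exfalso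
      have : (a : X) ∈ connectedComponentIn K (a : X) ∩ B₀ :=
        ⟨mem_connectedComponentIn a.2, ha⟩
      rw [h] at this; exact this
    · apply eq_empty_iff_forall_notMem.2
      rintro y ⟨hy, hyB⟩
      have : (y : X) ∈ connectedComponentIn K (a : X) ∩ B₁ := by
        rw [himg]; exact ⟨mem_image_of_mem _ hy, hyB⟩
      rw [h] at this; exact this
  obtain ⟨F, hFclopen, hFsub, hFdisj⟩ := clopen_separation_aux hA₀ hA₁ hsep
  set C₀ : Set X := B₀ ∪ Subtype.val '' F with hC₀def
  set C₁ : Set X := B₁ ∪ Subtype.val '' Fᶜ with hC₁def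
  have hFcomp : IsCompact (Subtype.val '' F) :=
    (hFclopen.1.isCompact).image continuous_subtype_val
  have hFccomp : IsCompact (Subtype.val '' Fᶜ) :=
    (hFclopen.2.isClosed_compl.isCompact).image continuous_subtype_val
  have hC₀ : IsClosed C₀ := hB₀.union hFcomp.isClosed
  have hC₁ : IsClosed C₁ := hB₁.union hFccomp.isClosed
  have hCdisj : Disjoint C₀ C₁ := by
    rw [disjoint_iff_inter_eq_empty]
    apply eq_empty_iff_forall_notMem.2
    rintro x ⟨hx0, hx1⟩
    rcases hx0 with hx0 | ⟨y, hyF, rfl⟩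
    · rcases hx1 with hx1 | ⟨y, hyFc, rfl⟩
      · exact hdisj.ne_of_mem hx0 hx1 rfl
      · exact hyFc (hFsub hx0)
    · rcases hx1 with hx1 | ⟨z, hzFc, hz⟩
      · exact absurd hFdisj (Set.Nonempty.ne_empty ⟨y, hyF, hx1⟩)
      · have : z = y := Subtype.val_injective hz
        exact hzFc (this ▸ hyF)
  obtain ⟨f, hf0, hf1, hf01⟩ := exists_continuous_zero_one_of_isClosed hC₀ hC₁ hCdisj
  refine ⟨f, f.continuous, hf01, fun x hx => hf0 (Or.inl hx), fun x hx => hf1 (Or.inl hx),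
    1/4, by norm_num, by norm_num, ?_⟩
  intro x hx
  rcases hx with (hx | hx) | hx
  · left; rw [hf0 (Or.inl hx)]; norm_num
  · right; rw [hf1 (Or.inl hx)]; norm_num
  · by_cases hxF : (⟨x, hx⟩ : K) ∈ F
    · left; rw [hf0 (Or.inr ⟨⟨x, hx⟩, hxF, rfl⟩)]; norm_num
    · right; rw [hf1 (Or.inr ⟨⟨x, hx⟩, hxF, rfl⟩)]; norm_num
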